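/- Let B, C ∈ B(H) be self-adjoint operators with ‖B + C‖ = ‖B‖ + ‖C‖. Then ‖B² + C²‖ = ‖B‖² + ‖C‖² and w(|B||C|) = ‖BC‖ = ‖B‖·‖C‖ = w(BC). -/

import Mathlib

set_option linter.unusedSectionVars false
set_option maxHeartbeats 1000000

open ContinuousLinearMap
open scoped InnerProductSpace ComplexConjugate NNReal

variable {H : Type*} [NormedAddCommGroup H] [InnerProductSpace ℂ H] [CompleteSpace H]

/-- The numerical radius of a bounded linear operator:
`w(T) = sup { |⟨Tx, x⟩| : ‖x‖ = 1 }`. -/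
noncomputable def numRadius {E : Type*} [NormedAddCommGroup E] [InnerProductSpace ℂ E]
    (T : E →L[ℂ] E) : ℝ :=
  sSup {r : ℝ | ∃ x : E, ‖x‖ = 1 ∧ r = ‖(inner ℂ (T x) x : ℂ)‖}

/-- The absolute value `|T| = (T*T)^(1/2)` of a bounded linear operator.
Note `opAbs (adjoint T) = (T T*)^(1/2) = |T*|`. -/
noncomputable def opAbs (T : H →L[ℂ] H) : H →L[ℂ] H := CFC.sqrt (adjoint T * T)

/-- The off-diagonal operator matrix `[[0, B], [C, 0]]` acting on `H ⊕ H`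
(with the Hilbert space structure `WithLp 2 (H × H)`) by `(x₁, x₂) ↦ (B x₂, C x₁)`. -/
noncomputable def offDiag (B C : H →L[ℂ] H) :
    WithLp 2 (H × H) →L[ℂ] WithLp 2 (H × H) :=
  ((WithLp.prodContinuousLinearEquiv 2 ℂ H H).symm : (H × H) →L[ℂ] WithLp 2 (H × H)).comp
    (((B.comp (ContinuousLinearMap.snd ℂ H H)).prod
        (C.comp (ContinuousLinearMap.fst ℂ H H))).comp
      ((WithLp.prodContinuousLinearEquiv 2 ℂ H H) : WithLp 2 (H × H) →L[ℂ] H × H))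

namespace Stmt19Helpers

lemma mem_bdd (T : H →L[ℂ] H) :
    ∀ r ∈ {r : ℝ | ∃ x : H, ‖x‖ = 1 ∧ r = ‖(inner ℂ (T x) x : ℂ)‖}, r ≤ ‖T‖ := by
  rintro r ⟨x, hx, rfl⟩
  calc ‖(⟪T x, x⟫_ℂ)‖ ≤ ‖T x‖ * ‖x‖ := norm_inner_le_norm _ _
  _ ≤ (‖T‖ * ‖x‖) * ‖x‖ := by gcongr; exact T.le_opNorm x
  _ = ‖T‖ := by rw [hx]; ring

lemma numRadius_le_norm (T : H →L[ℂ] H) : numRadius T ≤ ‖T‖ :=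
  Real.sSup_le (mem_bdd T) (norm_nonneg T)

lemma le_numRadius (T : H →L[ℂ] H) {x : H} (hx : ‖x‖ = 1) :
    ‖(⟪T x, x⟫_ℂ)‖ ≤ numRadius T :=
  le_csSup ⟨‖T‖, fun r hr => mem_bdd T r hr⟩ ⟨x, hx, rfl⟩

lemma numRadius_of_subsingleton [Subsingleton H] (T : H →L[ℂ] H) : numRadius T = 0 := by
  have : {r : ℝ | ∃ x : H, ‖x‖ = 1 ∧ r = ‖(inner ℂ (T x) x : ℂ)‖} = ∅ := by
    ext r
    simp only [Set.mem_setOf_eq, Set.mem_empty_iff_false, iff_false]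
    rintro ⟨x, hx, -⟩
    rw [Subsingleton.elim x 0] at hx
    simp at hx
  rw [numRadius, this, Real.sSup_empty]

lemma abs_re_le_norm'' (z : ℂ) : |z.re| ≤ ‖z‖ := by
  exact Complex.abs_re_le_norm z

lemma norm_le_of_inner_le {A : H →L[ℂ] H} (hA : IsSelfAdjoint A) {M : ℝ} (hM : 0 ≤ M)
    (hb : ∀ x : H, ‖x‖ = 1 → ‖(⟪A x, x⟫_ℂ)‖ ≤ M) : ‖A‖ ≤ M := by
  have hsym : (A : H →ₗ[ℂ] H).IsSymmetric :=
    (isSelfAdjoint_iff_isSymmetric).mp hA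
  have h1 : ∀ z : H, ‖(⟪A z, z⟫_ℂ)‖ ≤ M * ‖z‖ ^ 2 := by
    intro z
    rcases eq_or_ne z 0 with rfl | hz
    · simp
    · have hnz : ‖z‖ ≠ 0 := norm_ne_zero_iff.mpr hz
      set u : H := ((‖z‖⁻¹ : ℝ) : ℂ) • z with hu
      have hu1 : ‖u‖ = 1 := by
        rw [hu, norm_smul]
        simp [inv_mul_cancel₀ hnz]
      have hinner : (⟪A u, u⟫_ℂ) = ((‖z‖⁻¹ ^ 2 : ℝ) : ℂ) * ⟪A z, z⟫_ℂ := by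
        simp only [hu, map_smul, inner_smul_left, inner_smul_right, Complex.conj_ofReal]
        push_cast
        ring
      have hle := hb u hu1
      rw [hinner, norm_mul] at hle
      have h2 : ‖((‖z‖⁻¹ ^ 2 : ℝ) : ℂ)‖ = (‖z‖ ^ 2)⁻¹ := by
        rw [Complex.norm_real, Real.norm_eq_abs, abs_of_nonneg (by positivity), inv_pow]
      rw [h2] at hle
      have hpos : (0:ℝ) < ‖z‖ ^ 2 := by positivity
      calc ‖(⟪A z, z⟫_ℂ)‖ = (‖z‖ ^ 2) * ((‖z‖ ^ 2)⁻¹ * ‖(⟪A z, z⟫_ℂ)‖) := by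
            field_simp
      _ ≤ (‖z‖ ^ 2) * M := by gcongr
      _ = M * ‖z‖ ^ 2 := by ring
  have h2 : ∀ x y : H, (⟪A x, y⟫_ℂ).re ≤ (M / 2) * (‖x‖ ^ 2 + ‖y‖ ^ 2) := by
    intro x y
    have hconj : (⟪A y, x⟫_ℂ) = conj (⟪A x, y⟫_ℂ) :=
      (hsym y x).trans (inner_conj_symm _ _).symm
    have hexp : (⟪A (x + y), x + y⟫_ℂ) - ⟪A (x - y), x - y⟫_ℂ
        = ((4 * (⟪A x, y⟫_ℂ).re : ℝ) : ℂ) := by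
      have e1 : (⟪A (x + y), x + y⟫_ℂ) - ⟪A (x - y), x - y⟫_ℂ
          = 2 * ⟪A x, y⟫_ℂ + 2 * ⟪A y, x⟫_ℂ := by
        simp only [map_add, map_sub, inner_add_left, inner_add_right, inner_sub_left,
          inner_sub_right]
        ring
      rw [e1, hconj]
      have h4 := Complex.add_conj (⟪A x, y⟫_ℂ)
      push_cast at h4 ⊢
      linear_combination (2:ℂ) * h4
    have hre : (⟪A (x + y), x + y⟫_ℂ).re - (⟪A (x - y), x - y⟫_ℂ).re
        = 4 * (⟪A x, y⟫_ℂ).re := by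
      have := congrArg Complex.re hexp
      simpa [Complex.sub_re] using this
    have hb1 : (⟪A (x + y), x + y⟫_ℂ).re ≤ M * ‖x + y‖ ^ 2 := by
      calc (⟪A (x + y), x + y⟫_ℂ).re ≤ |(⟪A (x + y), x + y⟫_ℂ).re| := le_abs_self _
      _ ≤ ‖(⟪A (x + y), x + y⟫_ℂ)‖ := abs_re_le_norm'' _
      _ ≤ M * ‖x + y‖ ^ 2 := h1 _
    have hb2 : -(M * ‖x - y‖ ^ 2) ≤ (⟪A (x - y), x - y⟫_ℂ).re := by
      have ha := abs_re_le_norm'' (⟪A (x - y), x - y⟫_ℂ)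
      have h' := h1 (x - y)
      have := abs_le.mp (ha.trans h')
      linarith [this.1]
    have hpar := parallelogram_law_with_norm ℂ x y
    nlinarith [hb1, hb2, hre, hpar]
  refine A.opNorm_le_bound hM (fun x => ?_)
  rcases eq_or_ne (A x) 0 with hAx | hAx
  · rw [hAx, norm_zero]
    exact mul_nonneg hM (norm_nonneg x)
  have hAxn : (0:ℝ) < ‖A x‖ := norm_pos_iff.mpr hAx
  have key := h2 x (((‖x‖ / ‖A x‖ : ℝ) : ℂ) • A x)
  rw [inner_smul_right] at key
  have hre : (((‖x‖ / ‖A x‖ : ℝ) : ℂ) * ⟪A x, A x⟫_ℂ).re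
      = (‖x‖ / ‖A x‖) * ‖A x‖ ^ 2 := by
    rw [inner_self_eq_norm_sq_to_K (𝕜 := ℂ)]
    simp [← Complex.ofReal_pow, ← Complex.ofReal_mul, Complex.ofReal_re]
  rw [hre] at key
  have hn : ‖(((‖x‖ / ‖A x‖ : ℝ) : ℂ)) • A x‖ = ‖x‖ := by
    rw [norm_smul, Complex.norm_real, Real.norm_eq_abs, abs_of_nonneg (by positivity)]
    field_simp
  rw [hn] at key
  have hmain : ‖x‖ * ‖A x‖ ≤ M * ‖x‖ ^ 2 := by
    have hq : (‖x‖ / ‖A x‖) * ‖A x‖ ^ 2 = ‖x‖ * ‖A x‖ := by field_simp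
    nlinarith [key, hq]
  rcases eq_or_ne x 0 with rfl | hx
  · exact absurd (map_zero A) hAx
  · have hxp : (0:ℝ) < ‖x‖ := norm_pos_iff.mpr hx
    nlinarith [hmain]

lemma exists_unit_vector [Nontrivial H] : ∃ x : H, ‖x‖ = 1 := by
  obtain ⟨x, hx⟩ := NormedSpace.sphere_nonempty (E := H) (x := 0) (r := 1).mpr zero_le_one
  exact ⟨x, by simpa using hx⟩

lemma exists_unit_near' [Nontrivial H] {A : H →L[ℂ] H} (hA : IsSelfAdjoint A) {ε : ℝ}
    (hε : 0 < ε) : ∃ x : H, ‖x‖ = 1 ∧ ‖A‖ - ε ≤ ‖(⟪A x, x⟫_ℂ)‖ := by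
  by_contra hcon
  push_neg at hcon
  obtain ⟨x0, hx0⟩ := exists_unit_vector (H := H)
  rcases le_or_gt (‖A‖ - ε) 0 with hM | hM
  · exact absurd (hcon x0 hx0) (not_lt.mpr (hM.trans (norm_nonneg _)))
  · have := norm_le_of_inner_le hA hM.le (fun x hx => (hcon x hx).le)
    linarith

lemma opAbs_eq_cfc {B : H →L[ℂ] H} (hB : IsSelfAdjoint B) :
    opAbs B = cfc (fun t : ℝ => |t|) B := by
  have hsq : (0 : H →L[ℂ] H) ≤ B ^ 2 := by
    rw [sq]
    nth_rewrite 1 [← hB.star_eq]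
    exact star_mul_self_nonneg B
  have h1 : adjoint B * B = B ^ 2 := by
    rw [← star_eq_adjoint, hB.star_eq, sq]
  rw [opAbs, h1, CFC.sqrt_eq_cfc, cfc_nnreal_eq_real _ _ hsq]
  have hfun : (fun x : ℝ => ((NNReal.sqrt x.toNNReal : ℝ≥0) : ℝ)) = Real.sqrt := by
    funext x
    rw [Real.sqrt]
  rw [hfun]
  have h2 : B ^ 2 = cfc (fun t : ℝ => t ^ 2) B := (cfc_pow_id B 2 hB).symm
  rw [h2, ← cfc_comp' Real.sqrt (fun t : ℝ => t ^ 2) B (by fun_prop)]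
  exact cfc_congr fun t _ => Real.sqrt_sq_eq_abs t

lemma opAbs_selfAdjoint' {B : H →L[ℂ] H} (hB : IsSelfAdjoint B) :
    IsSelfAdjoint (opAbs B) := by
  rw [opAbs_eq_cfc hB]; exact cfc_predicate _ B

lemma le_opAbs' {B : H →L[ℂ] H} (hB : IsSelfAdjoint B) : B ≤ opAbs B := by
  have h : (0 : H →L[ℂ] H) ≤ cfc (fun t : ℝ => |t| - t) B :=
    cfc_nonneg fun t _ => by simp [sub_nonneg, le_abs_self]
  rw [cfc_sub (fun t : ℝ => |t|) (fun t : ℝ => t), cfc_id' (R := ℝ) B hB] at h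
  rw [opAbs_eq_cfc hB, ← sub_nonneg]
  exact h

lemma neg_le_opAbs' {B : H →L[ℂ] H} (hB : IsSelfAdjoint B) : -B ≤ opAbs B := by
  have h : (0 : H →L[ℂ] H) ≤ cfc (fun t : ℝ => |t| + t) B :=
    cfc_nonneg fun t _ => by linarith [abs_nonneg t, neg_abs_le t]
  rw [cfc_add (a := B) (fun t : ℝ => |t|) (fun t : ℝ => t), cfc_id' (R := ℝ) B hB] at h
  rw [opAbs_eq_cfc hB, neg_le, ← sub_nonneg, sub_neg_eq_add, add_comm]
  exact h

lemma opAbs_sq' {B : H →L[ℂ] H} (hB : IsSelfAdjoint B) : (opAbs B) ^ 2 = B ^ 2 := by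
  rw [opAbs_eq_cfc hB, ← cfc_pow _ 2 B]
  calc cfc (fun t : ℝ => |t| ^ 2) B = cfc (fun t : ℝ => t ^ 2) B :=
        cfc_congr fun t _ => sq_abs t
  _ = B ^ 2 := cfc_pow_id B 2 hB
lemma inner_mono {X Y : H →L[ℂ] H} (h : X ≤ Y) (x : H) :
    (⟪X x, x⟫_ℂ).re ≤ (⟪Y x, x⟫_ℂ).re := by
  have h0 := ((ContinuousLinearMap.le_def X Y).mp h).inner_nonneg_left x
  simp only [RCLike.re_to_complex, ContinuousLinearMap.sub_apply, inner_sub_left,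
    Complex.sub_re] at h0
  have h1 := (Complex.le_def.mp h0).1; simp only [Complex.zero_re, Complex.sub_re] at h1
  linarith

lemma apply_norm_eq_of_sq_eq {S T : H →L[ℂ] H} (hS : IsSelfAdjoint S) (hT : IsSelfAdjoint T)
    (h : S ^ 2 = T ^ 2) (x : H) : ‖S x‖ = ‖T x‖ := by
  have hSsym := isSelfAdjoint_iff_isSymmetric.mp hS
  have hTsym := isSelfAdjoint_iff_isSymmetric.mp hT
  have e1 : (⟪S x, S x⟫_ℂ) = ⟪x, (S ^ 2) x⟫_ℂ := by
    rw [sq, ContinuousLinearMap.mul_apply]; exact hSsym x (S x)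
  have e2 : (⟪T x, T x⟫_ℂ) = ⟪x, (T ^ 2) x⟫_ℂ := by
    rw [sq, ContinuousLinearMap.mul_apply]; exact hTsym x (T x)
  have e3 : (⟪S x, S x⟫_ℂ) = ⟪T x, T x⟫_ℂ := by rw [e1, e2, h]
  rw [inner_self_eq_norm_sq_to_K (𝕜 := ℂ), inner_self_eq_norm_sq_to_K (𝕜 := ℂ)] at e3
  have e4 : ‖S x‖ ^ 2 = ‖T x‖ ^ 2 := by exact_mod_cast e3
  calc ‖S x‖ = Real.sqrt (‖S x‖ ^ 2) := (Real.sqrt_sq (norm_nonneg _)).symm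
  _ = Real.sqrt (‖T x‖ ^ 2) := by rw [e4]
  _ = ‖T x‖ := Real.sqrt_sq (norm_nonneg _)

lemma opAbs_apply_norm {B : H →L[ℂ] H} (hB : IsSelfAdjoint B) (x : H) :
    ‖opAbs B x‖ = ‖B x‖ :=
  apply_norm_eq_of_sq_eq (opAbs_selfAdjoint' hB) hB (opAbs_sq' hB) x

lemma opAbs_norm_le {B : H →L[ℂ] H} (hB : IsSelfAdjoint B) : ‖opAbs B‖ ≤ ‖B‖ :=
  opNorm_le_bound _ (norm_nonneg B) fun x => by rw [opAbs_apply_norm hB]; exact B.le_opNorm x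

lemma dev_sq_le {x : H} (hx : ‖x‖ = 1) (y : H) {b γ δ : ℝ} (hy : ‖y‖ ≤ b) (hγ : γ ^ 2 = b ^ 2)
    (hre : b * (b - δ) ≤ γ * (⟪y, x⟫_ℂ).re) : ‖y - ((γ : ℝ) : ℂ) • x‖ ^ 2 ≤ 2 * b * δ := by
  have hb0 : 0 ≤ b := le_trans (norm_nonneg y) hy
  have h1 := norm_sub_sq (𝕜 := ℂ) y (((γ : ℝ) : ℂ) • x)
  rw [inner_smul_right] at h1
  have h2 : RCLike.re (((γ : ℝ) : ℂ) * ⟪y, x⟫_ℂ) = γ * (⟪y, x⟫_ℂ).re := by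
    simp [RCLike.re_to_complex, Complex.mul_re]
  have h3 : ‖(((γ : ℝ) : ℂ)) • x‖ ^ 2 = b ^ 2 := by
    rw [norm_smul, Complex.norm_real, Real.norm_eq_abs, hx, mul_one, sq_abs, hγ]
  rw [h2, h3] at h1
  nlinarith [norm_nonneg y, sq_nonneg (‖y‖ - b)]

lemma key_estimates [Nontrivial H] {B C : H →L[ℂ] H} (hB : IsSelfAdjoint B)
    (hC : IsSelfAdjoint C) (h : ‖B + C‖ = ‖B‖ + ‖C‖) {ε : ℝ} (hε : 0 < ε) :
    ∃ x : H, ‖x‖ = 1 ∧ (‖B‖ ^ 2 + ‖C‖ ^ 2 ≤ ‖(B ^ 2 + C ^ 2) x‖ + ε) ∧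
      (‖B‖ * ‖C‖ ≤ ‖(⟪(B * C) x, x⟫_ℂ)‖ + ε) ∧
      (‖B‖ * ‖C‖ ≤ ‖(⟪(opAbs B * opAbs C) x, x⟫_ℂ)‖ + ε) := by
  set b := ‖B‖ with hbdef
  set c := ‖C‖ with hcdef
  have hb0 : 0 ≤ b := norm_nonneg B
  have hc0 : 0 ≤ c := norm_nonneg C
  set M : ℝ := b + c + 1 with hMdef
  have hM : 0 < M := by linarith
  have hbM : b ≤ M := by linarith
  have hcM : c ≤ M := by linarith
  set δ : ℝ := ε ^ 2 / (8 * M ^ 3) with hδdef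
  have hδ : 0 < δ := div_pos (pow_pos hε 2) (by positivity)
  obtain ⟨x, hx, hnear⟩ := exists_unit_near' (hB.add hC) hδ
  rw [h] at hnear
  have hsymB := isSelfAdjoint_iff_isSymmetric.mp hB
  have hsymC := isSelfAdjoint_iff_isSymmetric.mp hC
  have hrealB : (⟪B x, x⟫_ℂ) = (((⟪B x, x⟫_ℂ).re : ℝ) : ℂ) := by
    refine (Complex.conj_eq_iff_re.mp ?_).symm
    calc conj (⟪B x, x⟫_ℂ) = ⟪x, B x⟫_ℂ := inner_conj_symm _ _
    _ = ⟪B x, x⟫_ℂ := (hsymB x x).symm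
  have hrealC : (⟪C x, x⟫_ℂ) = (((⟪C x, x⟫_ℂ).re : ℝ) : ℂ) := by
    refine (Complex.conj_eq_iff_re.mp ?_).symm
    calc conj (⟪C x, x⟫_ℂ) = ⟪x, C x⟫_ℂ := inner_conj_symm _ _
    _ = ⟪C x, x⟫_ℂ := (hsymC x x).symm
  set pB : ℝ := (⟪B x, x⟫_ℂ).re with hpBdef
  set pC : ℝ := (⟪C x, x⟫_ℂ).re with hpCdef
  set t : ℝ := pB + pC with htdef
  have hinnersum : (⟪(B + C) x, x⟫_ℂ) = ((t : ℝ) : ℂ) := by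
    rw [add_apply, inner_add_left, hrealB, hrealC]
    norm_cast
  have habs : b + c - δ ≤ |t| := by
    rw [hinnersum, Complex.norm_real, Real.norm_eq_abs] at hnear
    exact hnear
  set s : ℝ := if 0 ≤ t then 1 else -1 with hsdef
  have hs : s = 1 ∨ s = -1 := by by_cases h0 : 0 ≤ t <;> simp [hsdef, h0]
  have hst : s * t = |t| := by
    by_cases h0 : 0 ≤ t
    · simp [hsdef, h0, abs_of_nonneg h0]
    · simp [hsdef, h0, abs_of_neg (lt_of_not_ge h0)]
  have hs2 : s ^ 2 = 1 := by rcases hs with h' | h' <;> rw [h'] <;> norm_num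
  have hsabs : |s| = 1 := by rcases hs with h' | h' <;> rw [h'] <;> norm_num
  have hBx : ‖B x‖ ≤ b := by simpa [hx] using B.le_opNorm x
  have hCx : ‖C x‖ ≤ c := by simpa [hx] using C.le_opNorm x
  have hpB : |pB| ≤ b := by
    refine le_trans (abs_re_le_norm'' _) (le_trans (norm_inner_le_norm _ _) ?_)
    rw [hx, mul_one]; exact hBx
  have hpC : |pC| ≤ c := by
    refine le_trans (abs_re_le_norm'' _) (le_trans (norm_inner_le_norm _ _) ?_)
    rw [hx, mul_one]; exact hCx
  have hspBle : s * pB ≤ b := by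
    refine le_trans (le_abs_self _) ?_
    rw [abs_mul, hsabs, one_mul]; exact hpB
  have hspCle : s * pC ≤ c := by
    refine le_trans (le_abs_self _) ?_
    rw [abs_mul, hsabs, one_mul]; exact hpC
  have hsum : b + c - δ ≤ s * pB + s * pC := by
    rw [← mul_add]
    rw [show pB + pC = t from rfl, hst]
    exact habs
  have hspB : b - δ ≤ s * pB := by linarith
  have hspC : c - δ ≤ s * pC := by linarith
  set u : H := B x - ((s * b : ℝ) : ℂ) • x with hudef
  set v : H := C x - ((s * c : ℝ) : ℂ) • x with hvdef
  have hub : ‖u‖ ^ 2 ≤ 2 * b * δ :=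
    dev_sq_le hx (B x) hBx (by rw [mul_pow, hs2, one_mul])
      (by linarith [mul_le_mul_of_nonneg_left hspB hb0])
  have hvc : ‖v‖ ^ 2 ≤ 2 * c * δ :=
    dev_sq_le hx (C x) hCx (by rw [mul_pow, hs2, one_mul])
      (by linarith [mul_le_mul_of_nonneg_left hspC hc0])
  have hTBi : s * pB ≤ (⟪opAbs B x, x⟫_ℂ).re := by
    rcases hs with h' | h'
    · rw [h', one_mul]
      exact inner_mono (le_opAbs' hB) x
    · have h2 := inner_mono (neg_le_opAbs' hB) x
      rw [h']
      simp only [ContinuousLinearMap.neg_apply, inner_neg_left, Complex.neg_re] at h2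
      linarith
  have hTCi : s * pC ≤ (⟪opAbs C x, x⟫_ℂ).re := by
    rcases hs with h' | h'
    · rw [h', one_mul]
      exact inner_mono (le_opAbs' hC) x
    · have h2 := inner_mono (neg_le_opAbs' hC) x
      rw [h']
      simp only [ContinuousLinearMap.neg_apply, inner_neg_left, Complex.neg_re] at h2
      linarith
  have hTBx : ‖opAbs B x‖ ≤ b := by rw [opAbs_apply_norm hB]; exact hBx
  have hTCx : ‖opAbs C x‖ ≤ c := by rw [opAbs_apply_norm hC]; exact hCx
  set u' : H := opAbs B x - ((b : ℝ) : ℂ) • x with hu'def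
  set v' : H := opAbs C x - ((c : ℝ) : ℂ) • x with hv'def
  have hub' : ‖u'‖ ^ 2 ≤ 2 * b * δ :=
    dev_sq_le hx (opAbs B x) hTBx rfl
      (by linarith [mul_le_mul_of_nonneg_left (hspB.trans hTBi) hb0])
  have hvc' : ‖v'‖ ^ 2 ≤ 2 * c * δ :=
    dev_sq_le hx (opAbs C x) hTCx rfl
      (by linarith [mul_le_mul_of_nonneg_left (hspC.trans hTCi) hc0])
  set r : ℝ := Real.sqrt (2 * M * δ) with hrdef
  have hr0 : 0 ≤ r := Real.sqrt_nonneg _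
  have hr2 : r ^ 2 = 2 * M * δ :=
    Real.sq_sqrt (mul_nonneg (mul_nonneg zero_le_two hM.le) hδ.le)
  have hle_r : ∀ y : H, ‖y‖ ^ 2 ≤ 2 * b * δ ∨ ‖y‖ ^ 2 ≤ 2 * c * δ → ‖y‖ ≤ r := by
    intro y hy
    have h2 : ‖y‖ ^ 2 ≤ 2 * M * δ := by
      have hbδ := mul_le_mul_of_nonneg_right hbM hδ.le
      have hcδ := mul_le_mul_of_nonneg_right hcM hδ.le
      rcases hy with h' | h' <;> linarith
    calc ‖y‖ = Real.sqrt (‖y‖ ^ 2) := (Real.sqrt_sq (norm_nonneg _)).symm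
    _ ≤ r := Real.sqrt_le_sqrt h2
  have hur : ‖u‖ ≤ r := hle_r u (Or.inl hub)
  have hvr : ‖v‖ ≤ r := hle_r v (Or.inr hvc)
  have hur' : ‖u'‖ ≤ r := hle_r u' (Or.inl hub')
  have hvr' : ‖v'‖ ≤ r := hle_r v' (Or.inr hvc')
  have hMr : 2 * M * r ≤ ε := by
    have hsq : (2 * M * r) ^ 2 = ε ^ 2 := by
      rw [mul_pow, mul_pow, hr2, hδdef]
      field_simp
      ring
    have h1 : |2 * M * r| = |ε| := by
      rw [← Real.sqrt_sq_eq_abs, ← Real.sqrt_sq_eq_abs, hsq]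
    rw [abs_of_nonneg (mul_nonneg (mul_nonneg zero_le_two hM.le) hr0),
      abs_of_nonneg hε.le] at h1
    exact h1.le
  have hBxu : B x = u + ((s * b : ℝ) : ℂ) • x := by rw [hudef, sub_add_cancel]
  have hCxv : C x = v + ((s * c : ℝ) : ℂ) • x := by rw [hvdef, sub_add_cancel]
  have hTBxu : opAbs B x = u' + ((b : ℝ) : ℂ) • x := by rw [hu'def, sub_add_cancel]
  have hTCxv : opAbs C x = v' + ((c : ℝ) : ℂ) • x := by rw [hv'def, sub_add_cancel]
  refine ⟨x, hx, ?_, ?_, ?_⟩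
  · have hσB : ((s * b : ℝ) : ℂ) * ((s * b : ℝ) : ℂ) = ((b ^ 2 : ℝ) : ℂ) := by
      rw [← Complex.ofReal_mul]
      norm_cast
      linear_combination (b ^ 2) * hs2
    have hσC : ((s * c : ℝ) : ℂ) * ((s * c : ℝ) : ℂ) = ((c ^ 2 : ℝ) : ℂ) := by
      rw [← Complex.ofReal_mul]
      norm_cast
      linear_combination (c ^ 2) * hs2
    have hB2 : (B ^ 2) x = B u + ((s * b : ℝ) : ℂ) • u + ((b ^ 2 : ℝ) : ℂ) • x := by
      rw [sq, ContinuousLinearMap.mul_apply]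
      conv_lhs => rw [hBxu, map_add, map_smul, hBxu, smul_add, smul_smul, hσB]
      rw [← add_assoc]
    have hC2 : (C ^ 2) x = C v + ((s * c : ℝ) : ℂ) • v + ((c ^ 2 : ℝ) : ℂ) • x := by
      rw [sq, ContinuousLinearMap.mul_apply]
      conv_lhs => rw [hCxv, map_add, map_smul, hCxv, smul_add, smul_smul, hσC]
      rw [← add_assoc]
    have hid : (B ^ 2 + C ^ 2) x - ((b ^ 2 + c ^ 2 : ℝ) : ℂ) • x
        = B u + ((s * b : ℝ) : ℂ) • u + (C v + ((s * c : ℝ) : ℂ) • v) := by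
      rw [add_apply, hB2, hC2, Complex.ofReal_add, add_smul]
      abel
    have hBu : ‖B u‖ ≤ b * r :=
      le_trans (B.le_opNorm u) (mul_le_mul_of_nonneg_left hur hb0)
    have hσu : ‖((s * b : ℝ) : ℂ) • u‖ ≤ b * r := by
      rw [norm_smul, Complex.norm_real, Real.norm_eq_abs, abs_mul, hsabs, one_mul,
        abs_of_nonneg hb0]
      exact mul_le_mul_of_nonneg_left hur hb0
    have hCv : ‖C v‖ ≤ c * r :=
      le_trans (C.le_opNorm v) (mul_le_mul_of_nonneg_left hvr hc0)
    have hσv : ‖((s * c : ℝ) : ℂ) • v‖ ≤ c * r := by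
      rw [norm_smul, Complex.norm_real, Real.norm_eq_abs, abs_mul, hsabs, one_mul,
        abs_of_nonneg hc0]
      exact mul_le_mul_of_nonneg_left hvr hc0
    have hnormdev : ‖(B ^ 2 + C ^ 2) x - ((b ^ 2 + c ^ 2 : ℝ) : ℂ) • x‖ ≤ 2 * M * r := by
      rw [hid]
      calc ‖B u + ((s * b : ℝ) : ℂ) • u + (C v + ((s * c : ℝ) : ℂ) • v)‖
          ≤ ‖B u + ((s * b : ℝ) : ℂ) • u‖ + ‖C v + ((s * c : ℝ) : ℂ) • v‖ := norm_add_le _ _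
      _ ≤ (‖B u‖ + ‖((s * b : ℝ) : ℂ) • u‖) + (‖C v‖ + ‖((s * c : ℝ) : ℂ) • v‖) :=
          add_le_add (norm_add_le _ _) (norm_add_le _ _)
      _ ≤ (b * r + b * r) + (c * r + c * r) :=
          add_le_add (add_le_add hBu hσu) (add_le_add hCv hσv)
      _ ≤ 2 * M * r := by
          linarith [mul_le_mul_of_nonneg_right (show b + c ≤ M by linarith) hr0,
            mul_nonneg hM.le hr0]
    have hnx : ‖((b ^ 2 + c ^ 2 : ℝ) : ℂ) • x‖ = b ^ 2 + c ^ 2 := by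
      rw [norm_smul, Complex.norm_real, Real.norm_eq_abs, hx, mul_one,
        abs_of_nonneg (by positivity)]
    have h3 := norm_sub_norm_le (((b ^ 2 + c ^ 2 : ℝ) : ℂ) • x) ((B ^ 2 + C ^ 2) x)
    rw [hnx, norm_sub_rev] at h3
    linarith
  · have hσσ2 : ((s * c : ℝ) : ℂ) * ((s * b : ℝ) : ℂ) = ((b * c : ℝ) : ℂ) := by
      rw [← Complex.ofReal_mul]
      norm_cast
      linear_combination (b * c) * hs2
    have hBCx : (B * C) x = B v + (((s * c : ℝ) : ℂ) • u + ((b * c : ℝ) : ℂ) • x) := by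
      rw [ContinuousLinearMap.mul_apply]
      conv_lhs => rw [hCxv, map_add, map_smul, hBxu, smul_add, smul_smul, hσσ2]
    have hinner : (⟪(B * C) x, x⟫_ℂ)
        = ((b * c : ℝ) : ℂ) + (((s * c : ℝ) : ℂ) * ⟪u, x⟫_ℂ + ⟪B v, x⟫_ℂ) := by
      rw [hBCx, inner_add_left, inner_add_left, inner_smul_left, inner_smul_left,
        Complex.conj_ofReal, Complex.conj_ofReal, inner_self_eq_norm_sq_to_K (𝕜 := ℂ), hx]
      push_cast
      ring
    have herr : ‖((s * c : ℝ) : ℂ) * ⟪u, x⟫_ℂ + ⟪B v, x⟫_ℂ‖ ≤ 2 * M * r := by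
      have e1 : ‖((s * c : ℝ) : ℂ) * ⟪u, x⟫_ℂ‖ ≤ c * r := by
        rw [norm_mul, Complex.norm_real, Real.norm_eq_abs, abs_mul, hsabs, one_mul,
          abs_of_nonneg hc0]
        refine mul_le_mul_of_nonneg_left (le_trans (norm_inner_le_norm _ _) ?_) hc0
        rw [hx, mul_one]; exact hur
      have e2 : ‖(⟪B v, x⟫_ℂ)‖ ≤ b * r := by
        refine le_trans (norm_inner_le_norm _ _) ?_
        rw [hx, mul_one]
        exact le_trans (B.le_opNorm v) (mul_le_mul_of_nonneg_left hvr hb0)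
      calc ‖((s * c : ℝ) : ℂ) * ⟪u, x⟫_ℂ + ⟪B v, x⟫_ℂ‖
          ≤ ‖((s * c : ℝ) : ℂ) * ⟪u, x⟫_ℂ‖ + ‖(⟪B v, x⟫_ℂ)‖ := norm_add_le _ _
      _ ≤ c * r + b * r := add_le_add e1 e2
      _ ≤ 2 * M * r := by
          linarith [mul_le_mul_of_nonneg_right (show b + c ≤ M by linarith) hr0,
            mul_nonneg hM.le hr0]
    have hdecomp : ((b * c : ℝ) : ℂ)
        = (⟪(B * C) x, x⟫_ℂ) - (((s * c : ℝ) : ℂ) * ⟪u, x⟫_ℂ + ⟪B v, x⟫_ℂ) := by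
      rw [hinner]; ring
    calc b * c = ‖((b * c : ℝ) : ℂ)‖ := by
          rw [Complex.norm_real, Real.norm_eq_abs, abs_of_nonneg (mul_nonneg hb0 hc0)]
    _ ≤ ‖(⟪(B * C) x, x⟫_ℂ)‖ + ‖((s * c : ℝ) : ℂ) * ⟪u, x⟫_ℂ + ⟪B v, x⟫_ℂ‖ := by
          rw [hdecomp]; exact norm_sub_le _ _
    _ ≤ ‖(⟪(B * C) x, x⟫_ℂ)‖ + ε := by linarith
  · have hσσ3 : ((c : ℝ) : ℂ) * ((b : ℝ) : ℂ) = ((b * c : ℝ) : ℂ) := by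
      rw [← Complex.ofReal_mul]
      norm_cast
      ring
    have hTx : (opAbs B * opAbs C) x
        = opAbs B v' + (((c : ℝ) : ℂ) • u' + ((b * c : ℝ) : ℂ) • x) := by
      rw [ContinuousLinearMap.mul_apply]
      conv_lhs => rw [hTCxv, map_add, map_smul, hTBxu, smul_add, smul_smul, hσσ3]
    have hinner : (⟪(opAbs B * opAbs C) x, x⟫_ℂ)
        = ((b * c : ℝ) : ℂ) + (((c : ℝ) : ℂ) * ⟪u', x⟫_ℂ + ⟪opAbs B v', x⟫_ℂ) := by
      rw [hTx, inner_add_left, inner_add_left, inner_smul_left, inner_smul_left,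
        Complex.conj_ofReal, Complex.conj_ofReal, inner_self_eq_norm_sq_to_K (𝕜 := ℂ), hx]
      push_cast
      ring
    have herr : ‖((c : ℝ) : ℂ) * ⟪u', x⟫_ℂ + ⟪opAbs B v', x⟫_ℂ‖ ≤ 2 * M * r := by
      have e1 : ‖((c : ℝ) : ℂ) * ⟪u', x⟫_ℂ‖ ≤ c * r := by
        rw [norm_mul, Complex.norm_real, Real.norm_eq_abs, abs_of_nonneg hc0]
        refine mul_le_mul_of_nonneg_left (le_trans (norm_inner_le_norm _ _) ?_) hc0
        rw [hx, mul_one]; exact hur'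
      have e2 : ‖(⟪opAbs B v', x⟫_ℂ)‖ ≤ b * r := by
        refine le_trans (norm_inner_le_norm _ _) ?_
        rw [hx, mul_one]
        refine le_trans ((opAbs B).le_opNorm v') ?_
        exact mul_le_mul (opAbs_norm_le hB) hvr' (norm_nonneg _) hb0
      calc ‖((c : ℝ) : ℂ) * ⟪u', x⟫_ℂ + ⟪opAbs B v', x⟫_ℂ‖
          ≤ ‖((c : ℝ) : ℂ) * ⟪u', x⟫_ℂ‖ + ‖(⟪opAbs B v', x⟫_ℂ)‖ := norm_add_le _ _
      _ ≤ c * r + b * r := add_le_add e1 e2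
      _ ≤ 2 * M * r := by
          linarith [mul_le_mul_of_nonneg_right (show b + c ≤ M by linarith) hr0,
            mul_nonneg hM.le hr0]
    have hdecomp : ((b * c : ℝ) : ℂ)
        = (⟪(opAbs B * opAbs C) x, x⟫_ℂ) - (((c : ℝ) : ℂ) * ⟪u', x⟫_ℂ + ⟪opAbs B v', x⟫_ℂ) := by
      rw [hinner]; ring
    calc b * c = ‖((b * c : ℝ) : ℂ)‖ := by
          rw [Complex.norm_real, Real.norm_eq_abs, abs_of_nonneg (mul_nonneg hb0 hc0)]
    _ ≤ ‖(⟪(opAbs B * opAbs C) x, x⟫_ℂ)‖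
          + ‖((c : ℝ) : ℂ) * ⟪u', x⟫_ℂ + ⟪opAbs B v', x⟫_ℂ‖ := by
          rw [hdecomp]; exact norm_sub_le _ _
    _ ≤ ‖(⟪(opAbs B * opAbs C) x, x⟫_ℂ)‖ + ε := by linarith

end Stmt19Helpers

open Stmt19Helpers

theorem stmt_19 (B C : H →L[ℂ] H) (hB : IsSelfAdjoint B) (hC : IsSelfAdjoint C)
    (h : ‖B + C‖ = ‖B‖ + ‖C‖) :
    ‖B ^ 2 + C ^ 2‖ = ‖B‖ ^ 2 + ‖C‖ ^ 2 ∧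
      numRadius (opAbs B * opAbs C) = ‖B * C‖ ∧
      ‖B * C‖ = ‖B‖ * ‖C‖ ∧
      ‖B‖ * ‖C‖ = numRadius (B * C) := by
  rcases subsingleton_or_nontrivial H with hsub | hnt
  · have hS : ∀ T : H →L[ℂ] H, T = 0 := fun T =>
      ContinuousLinearMap.ext fun x => Subsingleton.elim _ _
    have h1 := numRadius_of_subsingleton (opAbs B * opAbs C)
    have h2 := numRadius_of_subsingleton (B * C)
    refine ⟨?_, ?_, ?_, ?_⟩
    · rw [hS (B ^ 2 + C ^ 2), hS B, hS C]; simp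
    · rw [h1, hS (B * C)]; simp
    · rw [hS (B * C), hS B, hS C]; simp
    · rw [h2, hS B, hS C]; simp
  · have hub2 : ‖B * C‖ ≤ ‖B‖ * ‖C‖ := norm_mul_le B C
    have hBsq : ‖B ^ 2‖ = ‖B‖ ^ 2 := by
      rw [sq]
      nth_rewrite 1 [← hB.star_eq]
      rw [CStarRing.norm_star_mul_self, ← sq]
    have hCsq : ‖C ^ 2‖ = ‖C‖ ^ 2 := by
      rw [sq]
      nth_rewrite 1 [← hC.star_eq]
      rw [CStarRing.norm_star_mul_self, ← sq]
    have hub1 : ‖B ^ 2 + C ^ 2‖ ≤ ‖B‖ ^ 2 + ‖C‖ ^ 2 := by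
      calc ‖B ^ 2 + C ^ 2‖ ≤ ‖B ^ 2‖ + ‖C ^ 2‖ := norm_add_le _ _
      _ = ‖B‖ ^ 2 + ‖C‖ ^ 2 := by rw [hBsq, hCsq]
    have hub3 : ‖opAbs B * opAbs C‖ ≤ ‖B‖ * ‖C‖ :=
      le_trans (norm_mul_le _ _)
        (mul_le_mul (opAbs_norm_le hB) (opAbs_norm_le hC) (norm_nonneg _) (norm_nonneg _))
    have hl1 : ‖B‖ ^ 2 + ‖C‖ ^ 2 ≤ ‖B ^ 2 + C ^ 2‖ := by
      refine le_of_forall_sub_le fun ε hε => ?_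
      obtain ⟨x, hx, h1, -, -⟩ := key_estimates hB hC h hε
      have h2 := (B ^ 2 + C ^ 2).le_opNorm x
      rw [hx, mul_one] at h2
      linarith
    have hl2 : ‖B‖ * ‖C‖ ≤ numRadius (B * C) := by
      refine le_of_forall_sub_le fun ε hε => ?_
      obtain ⟨x, hx, -, h2, -⟩ := key_estimates hB hC h hε
      have h3 := le_numRadius (B * C) hx
      linarith
    have hl3 : ‖B‖ * ‖C‖ ≤ numRadius (opAbs B * opAbs C) := by
      refine le_of_forall_sub_le fun ε hε => ?_
      obtain ⟨x, hx, -, -, h2⟩ := key_estimates hB hC h hε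
      have h3 := le_numRadius (opAbs B * opAbs C) hx
      linarith
    have hn2 : numRadius (B * C) ≤ ‖B * C‖ := numRadius_le_norm _
    have hn1 : numRadius (opAbs B * opAbs C) ≤ ‖opAbs B * opAbs C‖ := numRadius_le_norm _
    refine ⟨le_antisymm hub1 hl1, ?_, ?_, ?_⟩
    · exact le_antisymm (hn1.trans (hub3.trans (hl2.trans hn2))) (hub2.trans hl3)
    · exact le_antisymm hub2 (hl2.trans hn2)
    · exact le_antisymm hl2 (hn2.trans hub2)
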